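/- Let F be a Muller condition over a finite alphabet Σ. If L_F is recognised by a deterministic generalised Büchi automaton, then L_F is recognised by a deterministic generalised Büchi automaton with a single state; equivalently, there exist finitely many sets B₁,…,B_k ⊆ Σ such that L_F = {w ∈ Σ^ω : Inf(w) ∩ B_i ≠ ∅ for every i}. -/

import Mathlib

/-- The set of letters occurring infinitely often in the infinite word `w`. -/
def InfOcc {α : Type} (w : ℕ → α) : Set α :=
  {a | ∀ n, ∃ m, n ≤ m ∧ w m = a}

/-- A deterministic transition-based automaton over input alphabet `σ`
with output alphabet `Γ` and set of states `Q`. -/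
structure DetAut (σ Γ Q : Type) where
  init : Q
  δ : Q → σ → Q × Γ

namespace DetAut

variable {σ Γ Q : Type}

/-- The sequence of states of the run of `A` over `w`. -/
def run (A : DetAut σ Γ Q) (w : ℕ → σ) : ℕ → Q
  | 0 => A.init
  | n + 1 => (A.δ (run A w n) (w n)).1

/-- The output word produced by `A` reading `w`. -/
def output (A : DetAut σ Γ Q) (w : ℕ → σ) (n : ℕ) : Γ :=
  (A.δ (A.run w n) (w n)).2

end DetAut

/-- `u` satisfies the Rabin condition given by the pairs in `R`. -/
def RabinAccept {Γ : Type} (R : List (Set Γ × Set Γ)) (u : ℕ → Γ) : Prop :=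
  ∃ p ∈ R, (InfOcc u ∩ p.1).Nonempty ∧ InfOcc u ∩ p.2 = ∅

/-- `u` satisfies the Streett condition given by the pairs in `R`. -/
def StreettAccept {Γ : Type} (R : List (Set Γ × Set Γ)) (u : ℕ → Γ) : Prop :=
  ∀ p ∈ R, (InfOcc u ∩ p.1).Nonempty → (InfOcc u ∩ p.2).Nonempty

/-- The language accepted by the automaton `A` with Rabin condition `R`. -/
def RabinLang {σ Γ Q : Type} (A : DetAut σ Γ Q) (R : List (Set Γ × Set Γ)) :
    Set (ℕ → σ) :=
  {w | RabinAccept R (A.output w)}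

/-- The Muller language associated to the Muller condition `F`. -/
def LF {Γ : Type} (F : Set (Set Γ)) : Set (ℕ → Γ) :=
  {w | InfOcc w ∈ F}

/-- `u` satisfies the generalised Büchi condition given by the sets in `B`. -/
def GenBuchiAccept {Γ : Type} (B : List (Set Γ)) (u : ℕ → Γ) : Prop :=
  ∀ b ∈ B, (InfOcc u ∩ b).Nonempty

namespace Stmt10Aux

variable {σ Γ Q : Type}

def from' (A : DetAut σ Γ Q) (q : Q) : DetAut σ Γ Q := ⟨q, A.δ⟩

def shift (w : ℕ → σ) (n : ℕ) : ℕ → σ := fun k => w (n + k)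

lemma run_congr (A : DetAut σ Γ Q) {u v : ℕ → σ} (n : ℕ) (h : ∀ m < n, u m = v m) :
    A.run u n = A.run v n := by
  induction n with
  | zero => rfl
  | succ n ih =>
    have h1 : A.run u n = A.run v n := ih (fun m hm => h m (Nat.lt_succ_of_lt hm))
    show (A.δ (A.run u n) (u n)).1 = (A.δ (A.run v n) (v n)).1
    rw [h1, h n (Nat.lt_succ_self n)]

lemma run_add (A : DetAut σ Γ Q) (w : ℕ → σ) (n k : ℕ) :
    A.run w (n + k) = (from' A (A.run w n)).run (shift w n) k := by
  induction k with
  | zero => rfl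
  | succ k ih =>
    show A.run w (n + k + 1) = _
    show (A.δ (A.run w (n + k)) (w (n + k))).1 = (((from' A (A.run w n)).δ ((from' A (A.run w n)).run (shift w n) k) (shift w n k))).1
    rw [ih]; rfl

lemma output_add (A : DetAut σ Γ Q) (w : ℕ → σ) (n k : ℕ) :
    A.output w (n + k) = (from' A (A.run w n)).output (shift w n) k := by
  unfold DetAut.output
  rw [run_add]; rfl

lemma output_congr (A : DetAut σ Γ Q) {u v : ℕ → σ} (k : ℕ) (h : ∀ m ≤ k, u m = v m) :
    A.output u k = A.output v k := by
  unfold DetAut.output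
  rw [run_congr A k (fun m hm => h m hm.le), h k le_rfl]

lemma infOcc_shift (u : ℕ → σ) (n : ℕ) : InfOcc (shift u n) = InfOcc u := by
  ext a
  constructor
  · intro h m
    obtain ⟨k, hk, he⟩ := h m
    exact ⟨n + k, le_trans hk (Nat.le_add_left _ _), he⟩
  · intro h m
    obtain ⟨k, hk, he⟩ := h (n + m)
    refine ⟨k - n, by omega, ?_⟩
    show u (n + (k - n)) = a
    have : n + (k - n) = k := by omega
    rw [this]; exact he

lemma pigeon {D : Type} [Finite D] (v : ℕ → D) (M : Set ℕ)
    (hM : ∀ n, ∃ m, n ≤ m ∧ m ∈ M) :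
    ∃ d, ∀ n, ∃ m, n ≤ m ∧ m ∈ M ∧ v m = d := by
  by_contra hc
  push_neg at hc
  choose f hf using hc
  obtain ⟨m0, _, _⟩ := hM 0
  haveI : Nonempty D := ⟨v m0⟩
  obtain ⟨d0, hd0⟩ := Finite.exists_max f
  obtain ⟨m, hm, hmM⟩ := hM (f d0)
  exact hf (v m) m (le_trans (hd0 (v m)) hm) hmM rfl

lemma list_bound {β : Type} (B : List β) (P : β → ℕ → Prop)
    (h : ∀ b ∈ B, ∃ k, P b k) : ∃ N, ∀ b ∈ B, ∃ k < N, P b k := by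
  induction B with
  | nil => exact ⟨0, by simp⟩
  | cons b B ih =>
    obtain ⟨N, hN⟩ := ih (fun x hx => h x (List.mem_cons_of_mem _ hx))
    obtain ⟨k, hk⟩ := h b List.mem_cons_self
    refine ⟨max (k + 1) N, ?_⟩
    intro x hx
    rcases List.mem_cons.mp hx with rfl | hx
    · exact ⟨k, by omega, hk⟩
    · obtain ⟨k', hk', hP⟩ := hN x hx
      exact ⟨k', by omega, hP⟩

lemma upward_aux {σ Γ Q : Type} [Fintype σ] [Fintype Q] (F : Set (Set σ))
    (A : DetAut σ Γ Q) (B : List (Set Γ))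
    (hA : {w | GenBuchiAccept B (A.output w)} = LF F)
    {S T : Set σ} (hS : S.Nonempty) (hSF : S ∈ F) (hST : S ⊆ T) : T ∈ F := by
  classical
  obtain ⟨a0, ha0⟩ := hS
  -- language from a reachable state
  have Lq : ∀ q : Q, (∃ (w : ℕ → σ) (n : ℕ), A.run w n = q) → ∀ v : ℕ → σ,
      (GenBuchiAccept B ((from' A q).output v) ↔ InfOcc v ∈ F) := by
    rintro q ⟨w, n, hw⟩ v
    set w' : ℕ → σ := fun m => if m < n then w m else v (m - n) with hw'
    have hrun : A.run w' n = q := by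
      rw [← hw]
      exact (run_congr A n (fun m hm => by simp [hw', hm])).symm
    have hshift : shift w' n = v := by
      funext k
      simp only [hw', shift]
      rw [if_neg (by omega)]
      congr 1; omega
    have hout : ∀ k, A.output w' (n + k) = (from' A q).output v k := by
      intro k; rw [output_add, hrun, hshift]
    have h1 : InfOcc ((from' A q).output v) = InfOcc (A.output w') := by
      rw [← infOcc_shift (A.output w') n]
      have he : (from' A q).output v = shift (A.output w') n := by
        funext k; exact (hout k).symm
      rw [he]
    have h2 : InfOcc v = InfOcc w' := by
      rw [← infOcc_shift w' n, hshift]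
    have h3 : GenBuchiAccept B (A.output w') ↔ InfOcc w' ∈ F := by
      have := Set.ext_iff.mp hA w'
      simpa [LF] using this
    simp only [GenBuchiAccept] at h3 ⊢
    rw [h1, h2]
    exact h3
  -- lists for S and T
  set slist := (Set.toFinite S).toFinset.toList with hslist
  have hs_mem : ∀ a, a ∈ slist ↔ a ∈ S := by
    intro a; rw [hslist, Finset.mem_toList, Set.Finite.mem_toFinset]
  have hslen : 0 < slist.length := List.length_pos_of_mem ((hs_mem a0).mpr ha0)
  set tlist := (Set.toFinite T).toFinset.toList with htlist
  have ht_mem : ∀ a, a ∈ tlist ↔ a ∈ T := by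
    intro a; rw [htlist, Finset.mem_toList, Set.Finite.mem_toFinset]
  have htlen : 0 < tlist.length := List.length_pos_of_mem ((ht_mem a0).mpr (hST ha0))
  set vS : ℕ → σ := fun k => slist.getD (k % slist.length) a0 with hvS
  have hvS_mem : ∀ k, vS k ∈ S := by
    intro k
    rw [← hs_mem]
    have hk : k % slist.length < slist.length := Nat.mod_lt _ hslen
    show slist.getD (k % slist.length) a0 ∈ slist
    rw [List.getD_eq_getElem _ _ hk]
    exact List.getElem_mem _
  have hInfS : InfOcc vS = S := by
    ext a
    constructor
    · intro h
      obtain ⟨m, _, hm⟩ := h 0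
      rw [← hm]; exact hvS_mem m
    · intro haS n
      obtain ⟨i, hi, hgi⟩ := List.mem_iff_getElem.mp ((hs_mem a).mpr haS)
      refine ⟨i + slist.length * n, ?_, ?_⟩
      · have : n ≤ slist.length * n := Nat.le_mul_of_pos_left n hslen
        omega
      · show slist.getD ((i + slist.length * n) % slist.length) a0 = a
        rw [Nat.add_mul_mod_self_left, Nat.mod_eq_of_lt hi, List.getD_eq_getElem _ _ hi]
        exact hgi
  -- pump words
  have pump : ∀ q : Q, ∃ N, (∃ (w : ℕ → σ) (n : ℕ), A.run w n = q) →
      ∀ b ∈ B, ∃ k < N, (from' A q).output vS k ∈ b := by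
    intro q
    by_cases hq : ∃ (w : ℕ → σ) (n : ℕ), A.run w n = q
    · have hacc : GenBuchiAccept B ((from' A q).output vS) :=
        (Lq q hq vS).mpr (by rw [hInfS]; exact hSF)
      have hex : ∀ b ∈ B, ∃ k, (from' A q).output vS k ∈ b := by
        intro b hb
        obtain ⟨c, hc1, hc2⟩ := hacc b hb
        obtain ⟨m, _, hm⟩ := hc1 0
        exact ⟨m, by rw [hm]; exact hc2⟩
      obtain ⟨N, hN⟩ := list_bound B _ hex
      exact ⟨N, fun _ => hN⟩
    · exact ⟨0, fun h => absurd h hq⟩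
  choose N hN using pump
  -- block structure
  set L : Q → ℕ := fun q => N q + tlist.length with hL
  set blockFun : Q → ℕ → σ := fun q j => if j < N q then vS j else tlist.getD (j - N q) a0
    with hblock
  have hblock_memT : ∀ q j, blockFun q j ∈ T := by
    intro q j
    rw [hblock]
    dsimp only
    split
    · exact hST (hvS_mem j)
    · by_cases hj : j - N q < tlist.length
      · rw [List.getD_eq_getElem _ _ hj, ← ht_mem]
        exact List.getElem_mem _
      · rw [List.getD_eq_default _ _ (by omega)]
        exact hST ha0
  have hLpos : ∀ q, 0 < L q := by
    intro q; show 0 < N q + tlist.length; omega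
  have hLdef : ∀ q, L q = N q + tlist.length := fun q => rfl
  set step : ℕ × Q → ℕ × Q :=
    fun p => (p.1 + L p.2, (from' A p.2).run (blockFun p.2) (L p.2)) with hstep
  set ps : ℕ → ℕ × Q := fun i => step^[i] (0, A.init) with hps
  set pos : ℕ → ℕ := fun i => (ps i).1 with hposd
  set st : ℕ → Q := fun i => (ps i).2 with hstd
  have hps_succ : ∀ i, ps (i + 1) = step (ps i) := by
    intro i; rw [hps]; exact Function.iterate_succ_apply' step i _
  have hpos_succ : ∀ i, pos (i + 1) = pos i + L (st i) := by
    intro i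
    show (ps (i + 1)).1 = (ps i).1 + L ((ps i).2)
    rw [hps_succ]
  have hst_succ : ∀ i, st (i + 1) = (from' A (st i)).run (blockFun (st i)) (L (st i)) := by
    intro i
    show (ps (i + 1)).2 = (from' A ((ps i).2)).run (blockFun ((ps i).2)) (L ((ps i).2))
    rw [hps_succ]
  have hpos0 : pos 0 = 0 := rfl
  have hst0 : st 0 = A.init := rfl
  have hpos_mono : ∀ i j, i ≤ j → pos i ≤ pos j := by
    intro i j hij
    induction j with
    | zero =>
      have h0 : i = 0 := Nat.le_zero.mp hij
      subst h0; exact le_rfl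
    | succ j ih =>
      have hstep : pos j ≤ pos (j + 1) := by rw [hpos_succ]; omega
      rcases Nat.lt_succ_iff_lt_or_eq.mp (Nat.lt_succ_of_le hij) with h | h
      · exact le_trans (ih (by omega)) hstep
      · subst h; exact le_rfl
  have hpos_ge : ∀ i, i ≤ pos i := by
    intro i
    induction i with
    | zero => omega
    | succ i ih =>
      have := hpos_succ i
      have := hLpos (st i)
      omega
  set idx : ℕ → ℕ := fun n => Nat.findGreatest (fun i => pos i ≤ n) n with hidxd
  have hidx1 : ∀ n, pos (idx n) ≤ n := by
    intro n
    have h0 : (fun i => pos i ≤ n) 0 := by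
      show pos 0 ≤ n
      rw [hpos0]; exact Nat.zero_le n
    exact Nat.findGreatest_spec (P := fun i => pos i ≤ n) (Nat.zero_le n) h0
  have hidx2 : ∀ n, n < pos (idx n + 1) := by
    intro n
    by_cases hc : idx n + 1 ≤ n
    · by_contra hcon
      push_neg at hcon
      exact Nat.findGreatest_is_greatest (Nat.lt_succ_self _) hc hcon
    · have h1 := hpos_ge (idx n + 1)
      omega
  have hidx_eq : ∀ i n, pos i ≤ n → n < pos (i + 1) → idx n = i := by
    intro i n h1 h2
    have hge : i ≤ idx n := Nat.le_findGreatest (le_trans (hpos_ge i) h1) h1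
    have hle : idx n ≤ i := by
      by_contra hcon
      push_neg at hcon
      have h3 := hpos_mono (i + 1) (idx n) (by omega)
      have h4 := hidx1 n
      omega
    omega
  set w : ℕ → σ := fun n => blockFun (st (idx n)) (n - pos (idx n)) with hwdef
  have hw_block : ∀ i j, j < L (st i) → w (pos i + j) = blockFun (st i) j := by
    intro i j hj
    have h1 : pos i ≤ pos i + j := Nat.le_add_right _ _
    have h2 : pos i + j < pos (i + 1) := by rw [hpos_succ]; omega
    rw [hwdef]
    dsimp only
    rw [hidx_eq i _ h1 h2]
    congr 1
    omega
  have hrun_block : ∀ i, A.run w (pos i) = st i →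
      ∀ j, j ≤ L (st i) → A.run w (pos i + j) = (from' A (st i)).run (blockFun (st i)) j := by
    intro i hi j hj
    rw [run_add, hi]
    exact run_congr _ j (fun m hm => hw_block i m (by omega))
  have hrun_pos : ∀ i, A.run w (pos i) = st i := by
    intro i
    induction i with
    | zero => rw [hpos0, hst0]; rfl
    | succ i ih =>
      rw [hpos_succ, hrun_block i ih (L (st i)) le_rfl, hst_succ]
  have hout_block : ∀ i j, j < L (st i) →
      A.output w (pos i + j) = (from' A (st i)).output (blockFun (st i)) j := by
    intro i j hj
    rw [output_add, hrun_pos i]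
    exact output_congr _ j (fun m hm => hw_block i m (by omega))
  -- Inf w = T
  have hInfwT : InfOcc w = T := by
    ext a
    constructor
    · intro h
      obtain ⟨m, _, hm⟩ := h 0
      rw [← hm]
      exact hblock_memT _ _
    · intro haT n
      obtain ⟨jT, hjT, hjTa⟩ := List.mem_iff_getElem.mp ((ht_mem a).mpr haT)
      refine ⟨pos n + (N (st n) + jT), ?_, ?_⟩
      · have := hpos_ge n; omega
      · rw [hw_block n _ (show N (st n) + jT < L (st n) by rw [hLdef]; omega)]
        rw [hblock]
        dsimp only
        rw [if_neg (by omega)]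
        have : N (st n) + jT - N (st n) = jT := by omega
        rw [this, List.getD_eq_getElem _ _ hjT]
        exact hjTa
  -- acceptance
  have hacc : GenBuchiAccept B (A.output w) := by
    intro b hb
    have hM : ∀ n, ∃ m, n ≤ m ∧ m ∈ {m | A.output w m ∈ b} := by
      intro n
      obtain ⟨k, hk, hkb⟩ := hN (st n) ⟨w, pos n, hrun_pos n⟩ b hb
      refine ⟨pos n + k, by have := hpos_ge n; omega, ?_⟩
      show A.output w (pos n + k) ∈ b
      rw [hout_block n k (show k < L (st n) by rw [hLdef]; omega)]
      have hagree : ∀ m ≤ k, blockFun (st n) m = vS m := by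
        intro m hm
        show (if m < N (st n) then vS m else tlist.getD (m - N (st n)) a0) = vS m
        rw [if_pos (by omega)]
      rw [output_congr _ k hagree]
      exact hkb
    obtain ⟨d, hd⟩ := pigeon (fun m => (A.run w m, w m)) _ hM
    refine ⟨(A.δ d.1 d.2).2, ?_, ?_⟩
    · intro n
      obtain ⟨m, hm1, _, hm3⟩ := hd n
      refine ⟨m, hm1, ?_⟩
      show (A.δ (A.run w m) (w m)).2 = _
      rw [show A.run w m = d.1 from congrArg Prod.fst hm3,
        show w m = d.2 from congrArg Prod.snd hm3]
    · obtain ⟨m, _, hm2, hm3⟩ := hd 0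
      have : (A.δ d.1 d.2).2 = A.output w m := by
        show _ = (A.δ (A.run w m) (w m)).2
        rw [show A.run w m = d.1 from congrArg Prod.fst hm3,
          show w m = d.2 from congrArg Prod.snd hm3]
      rw [this]
      exact hm2
  have hw : w ∈ LF F := by rw [← hA]; exact hacc
  have : InfOcc w ∈ F := hw
  rwa [hInfwT] at this

end Stmt10Aux

lemma Stmt10Aux.infOcc_nonempty {σ : Type} [Fintype σ] (w : ℕ → σ) :
    (InfOcc w).Nonempty := by
  obtain ⟨d, hd⟩ := Stmt10Aux.pigeon w Set.univ (fun n => ⟨n, le_rfl, trivial⟩)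
  refine ⟨d, fun n => ?_⟩
  obtain ⟨m, h1, _, h3⟩ := hd n
  exact ⟨m, h1, h3⟩



/-- If the Muller language `L_F` is recognised by a deterministic generalised
Büchi automaton, then it is recognised by one with a single state;
equivalently, `L_F = {w | Inf(w) ∩ Bᵢ ≠ ∅ for every i}` for finitely many sets
`B₁, …, B_k ⊆ σ`. -/
theorem stmt10 {σ : Type} [Fintype σ] (F : Set (Set σ))
    (h : ∃ (Q : Type) (_ : Fintype Q) (Γ : Type) (A : DetAut σ Γ Q)
        (B : List (Set Γ)), {w | GenBuchiAccept B (A.output w)} = LF F) :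
    (∃ (Γ : Type) (A : DetAut σ Γ PUnit) (B : List (Set Γ)),
        {w | GenBuchiAccept B (A.output w)} = LF F) ∧
    (∃ B : List (Set σ),
        LF F = {w : ℕ → σ | ∀ b ∈ B, (InfOcc w ∩ b).Nonempty}) := by
  classical
  obtain ⟨Q, hQ, Γ, A, B, hA⟩ := h
  haveI := hQ
  have upward : ∀ S T : Set σ, S.Nonempty → S ∈ F → S ⊆ T → T ∈ F :=
    fun S T hS hSF hST => Stmt10Aux.upward_aux F A B hA hS hSF hST
  set B₀ : List (Set σ) :=
    ((Finset.univ : Finset (Finset σ)).filter (fun C : Finset σ => (↑C : Set σ) ∉ F)).toList.map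
      (fun C : Finset σ => (↑C : Set σ)ᶜ) with hB₀
  have hB₀mem : ∀ b : Set σ, b ∈ B₀ ↔ ∃ C : Finset σ, (↑C : Set σ) ∉ F ∧ (↑C : Set σ)ᶜ = b := by
    intro b
    rw [hB₀, List.mem_map]
    constructor
    · rintro ⟨C, hC, rfl⟩
      rw [Finset.mem_toList, Finset.mem_filter] at hC
      exact ⟨C, hC.2, rfl⟩
    · rintro ⟨C, hC, rfl⟩
      refine ⟨C, ?_, rfl⟩
      rw [Finset.mem_toList, Finset.mem_filter]
      exact ⟨Finset.mem_univ C, hC⟩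
  have hmain : LF F = {w : ℕ → σ | ∀ b ∈ B₀, (InfOcc w ∩ b).Nonempty} := by
    ext w
    simp only [LF, Set.mem_setOf_eq]
    constructor
    · intro hw b hbB
      obtain ⟨C, hCF, rfl⟩ := (hB₀mem b).mp hbB
      by_contra hcon
      rw [Set.not_nonempty_iff_eq_empty] at hcon
      have hsub : InfOcc w ⊆ (↑C : Set σ) := by
        intro a ha
        by_contra hac
        exact absurd hcon (Set.nonempty_iff_ne_empty.mp ⟨a, ha, hac⟩)
      exact hCF (upward _ _ (Stmt10Aux.infOcc_nonempty w) hw hsub)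
    · intro hb
      by_contra hw
      set C := (Set.toFinite (InfOcc w)).toFinset with hC
      have hCcoe : (↑C : Set σ) = InfOcc w := Set.Finite.coe_toFinset _
      have hmem : (↑C : Set σ)ᶜ ∈ B₀ :=
        (hB₀mem _).mpr ⟨C, by rw [hCcoe]; exact hw, rfl⟩
      obtain ⟨a, ha1, ha2⟩ := hb _ hmem
      rw [hCcoe] at ha2
      exact ha2 ha1
  refine ⟨⟨σ, ⟨PUnit.unit, fun _ a => (PUnit.unit, a)⟩, B₀, ?_⟩, ⟨B₀, hmain.symm ▸ hmain⟩⟩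
  have houtid : ∀ w : ℕ → σ,
      (⟨PUnit.unit, fun _ a => (PUnit.unit, a)⟩ : DetAut σ σ PUnit).output w = w :=
    fun w => funext fun n => rfl
  ext w
  simp only [Set.mem_setOf_eq, GenBuchiAccept, houtid]
  rw [hmain]
  rfl
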